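/- arXiv:0709.1270 — 2 statements merged into one kernel-verified Lean document; each statement's English description precedes it below -/
import Mathlib

section
/- For every n ≥ 1, the n-th recursively defined fragment graph on the (2^n−1)×(2^n−1) grid is a tree (connected and acyclic) spanning all (2^n−1)^2 vertices. -/
/-- Translation of the plane `ℤ²`. -/
def trP (t p : ℤ × ℤ) : ℤ × ℤ := (p.1 + t.1, p.2 + t.2)

/-- Vertical reflection inside a block of height `m` (`y ↦ m - 1 - y`):
used to turn two of the four copies upside down. -/
def reflP (m : ℤ) (p : ℤ × ℤ) : ℤ × ℤ := (p.1, m - 1 - p.2)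

/-- The edge set of the `n`-th fragment, a subgraph of the grid `ℤ²` living on
the square `[0, 2^n-2] × [0, 2^n-2]`.  The first fragment is a single vertex
with no edges; the `(n+1)`-th fragment consists of four copies of the `n`-th
fragment placed in the four quadrants (the two top ones turned upside down),
joined to the full central row and column by one connecting edge per copy. -/
def fragEdges : ℕ → Set (Sym2 (ℤ × ℤ))
  | 0 => ∅
  | 1 => ∅
  | (n + 2) =>
      let m : ℤ := 2 ^ (n + 1) - 1
      (Sym2.map (trP (0, 0)) '' fragEdges (n + 1)) ∪
      (Sym2.map (trP (m + 1, 0)) '' fragEdges (n + 1)) ∪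
      (Sym2.map (fun p => trP (0, m + 1) (reflP m p)) '' fragEdges (n + 1)) ∪
      (Sym2.map (fun p => trP (m + 1, m + 1) (reflP m p)) '' fragEdges (n + 1)) ∪
      {e | ∃ x : ℤ, 0 ≤ x ∧ x < 2 * m ∧ e = s((x, m), (x + 1, m))} ∪
      {e | ∃ y : ℤ, 0 ≤ y ∧ y < 2 * m ∧ e = s((m, y), (m, y + 1))} ∪
      {s((m - 1, m - 1), (m - 1, m)), s((m + 1, m - 1), (m + 1, m)),
       s((m - 1, m + 1), (m - 1, m)), s((m + 1, m + 1), (m + 1, m))}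

/-- The vertex set of the `n`-th fragment: the `(2^n-1) × (2^n-1)` grid square. -/
def fragVerts (n : ℕ) : Set (ℤ × ℤ) :=
  {p | 0 ≤ p.1 ∧ p.1 < 2 ^ n - 1 ∧ 0 ≤ p.2 ∧ p.2 < 2 ^ n - 1}


open SimpleGraph

variable {V : Type*}

def EdgesIn (E : Set (Sym2 V)) (S : Set V) : Prop := ∀ e ∈ E, ∀ v ∈ e, v ∈ S

lemma reach_of_adj_reach {W : Type*} {G : SimpleGraph V} {H : SimpleGraph W} (f : V → W)
    (h : ∀ a b, G.Adj a b → H.Reachable (f a) (f b)) {u v : V} (huv : G.Reachable u v) :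
    H.Reachable (f u) (f v) := by
  obtain ⟨w⟩ := huv
  induction w with
  | nil => exact Reachable.refl _
  | cons ha _ ih => exact (h _ _ ha).trans ih

lemma reach_invariant {G : SimpleGraph V} (σ : V → Prop)
    (h : ∀ a b, G.Adj a b → (σ a ↔ σ b)) {u v : V} (huv : G.Reachable u v) : σ u ↔ σ v := by
  obtain ⟨w⟩ := huv
  induction w with
  | nil => rfl
  | cons ha _ ih => exact (h _ _ ha).trans ih

lemma bridge_aux {S S₁ : Set V} {Etot E₁ : Set (Sym2 V)}
    (hE₁ : EdgesIn E₁ S₁)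
    (hT₁ : (SimpleGraph.induce S₁ (fromEdgeSet E₁)).IsTree)
    {a : V} (ha : a ∈ S₁)
    (hsplit : ∀ e ∈ Etot, e ∈ E₁ ∨ (∀ v ∈ e, v ∉ S₁) ∨ ∃ q, q ∉ S₁ ∧ e = s(a, q))
    {x y : ↥S} (hx : (x : V) ∈ S₁) (hy : (y : V) ∈ S₁) (hmem : s((x : V), (y : V)) ∈ E₁)
    (hne : (x : V) ≠ (y : V)) :
    ¬ ((SimpleGraph.induce S (fromEdgeSet Etot)) \ fromEdgeSet {s(x, y)}).Reachable x y := by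
  intro hreach
  set T₁ := SimpleGraph.induce S₁ (fromEdgeSet E₁) with hT₁def
  have hadj : T₁.Adj ⟨x, hx⟩ ⟨y, hy⟩ := by
    simp only [hT₁def, comap_adj, Function.Embedding.coe_subtype, fromEdgeSet_adj]
    exact ⟨hmem, hne⟩
  have hbr := (isAcyclic_iff_forall_edge_isBridge.mp hT₁.IsAcyclic) (T₁.mem_edgeSet.mpr hadj)
  rw [isBridge_iff] at hbr
  haveI : ∀ z : V, Decidable (z ∈ S₁) := fun z => Classical.dec _
  set π : ↥S → ↥S₁ := fun z => if h : (z : V) ∈ S₁ then ⟨z, h⟩ else ⟨a, ha⟩ with hπdef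
  have hπ : ∀ p q : ↥S,
      ((SimpleGraph.induce S (fromEdgeSet Etot)) \ fromEdgeSet {s(x, y)}).Adj p q →
      (T₁ \ fromEdgeSet {s((⟨x, hx⟩ : ↥S₁), (⟨y, hy⟩ : ↥S₁))}).Reachable (π p) (π q) := by
    intro p q hpq
    rw [sdiff_adj] at hpq
    obtain ⟨hpq₁, hpq₂⟩ := hpq
    simp only [comap_adj, Function.Embedding.coe_subtype, fromEdgeSet_adj] at hpq₁
    obtain ⟨hmemtot, hnepq⟩ := hpq₁
    have hpqne : p ≠ q := fun h => hnepq (by rw [h])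
    have hvalne : s((p : V), (q : V)) ≠ s((x : V), (y : V)) := by
      intro h
      have hsub : s(p, q) = s(x, y) :=
        Sym2.map.injective Subtype.val_injective (by simpa [Sym2.map_pair_eq] using h)
      exact hpq₂ (by rw [fromEdgeSet_adj]; exact ⟨hsub, hpqne⟩)
    rcases hsplit _ hmemtot with hin | hout | ⟨r, hr, hconn⟩
    · have hp : (p : V) ∈ S₁ := hE₁ _ hin _ (Sym2.mem_mk_left _ _)
      have hq : (q : V) ∈ S₁ := hE₁ _ hin _ (Sym2.mem_mk_right _ _)
      have hπp : π p = ⟨p, hp⟩ := dif_pos hp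
      have hπq : π q = ⟨q, hq⟩ := dif_pos hq
      rw [hπp, hπq]
      refine SimpleGraph.Adj.reachable ?_
      rw [sdiff_adj]
      constructor
      · simp only [hT₁def, comap_adj, Function.Embedding.coe_subtype, fromEdgeSet_adj]
        exact ⟨hin, hnepq⟩
      · rw [fromEdgeSet_adj]
        rintro ⟨heq, -⟩
        apply hvalne
        have := congrArg (Sym2.map (Subtype.val : ↥S₁ → V)) heq
        simpa [Sym2.map_pair_eq] using this
    · have hπp : π p = ⟨a, ha⟩ := dif_neg (hout _ (Sym2.mem_mk_left _ _))
      have hπq : π q = ⟨a, ha⟩ := dif_neg (hout _ (Sym2.mem_mk_right _ _))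
      rw [hπp, hπq]
    · rw [Sym2.eq_iff] at hconn
      rcases hconn with ⟨hpa, hqr⟩ | ⟨hpr, hqa⟩
      · have hπp : π p = ⟨a, ha⟩ := by
          have hm : (p : V) ∈ S₁ := hpa ▸ ha
          rw [hπdef]; simp only; rw [dif_pos hm]; exact Subtype.ext hpa
        have hπq : π q = ⟨a, ha⟩ := dif_neg (hqr ▸ hr)
        rw [hπp, hπq]
      · have hπq : π q = ⟨a, ha⟩ := by
          have hm : (q : V) ∈ S₁ := hqa ▸ ha
          rw [hπdef]; simp only; rw [dif_pos hm]; exact Subtype.ext hqa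
        have hπp : π p = ⟨a, ha⟩ := dif_neg (hpr ▸ hr)
        rw [hπp, hπq]
  have hfin := reach_of_adj_reach π hπ hreach
  have hπx : π x = ⟨x, hx⟩ := dif_pos hx
  have hπy : π y = ⟨y, hy⟩ := dif_pos hy
  rw [hπx, hπy] at hfin
  exact hbr hfin

lemma cut_aux {S S₁ : Set V} {Etot : Set (Sym2 V)} {a b : V}
    (hsplit : ∀ e ∈ Etot, (∀ v ∈ e, v ∈ S₁) ∨ (∀ v ∈ e, v ∉ S₁) ∨ e = s(a, b))
    (ha : a ∈ S₁) (hb : b ∉ S₁)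
    {x y : ↥S} (hxa : (x : V) = a) (hyb : (y : V) = b) :
    ¬ ((SimpleGraph.induce S (fromEdgeSet Etot)) \ fromEdgeSet {s(x, y)}).Reachable x y := by
  intro hreach
  have key := reach_invariant (G := (SimpleGraph.induce S (fromEdgeSet Etot)) \
      fromEdgeSet {s(x, y)}) (fun z : ↥S => (z : V) ∈ S₁) ?_ hreach
  · have h1 : (x : V) ∈ S₁ := by rw [hxa]; exact ha
    have h2 : (y : V) ∈ S₁ := key.mp h1
    rw [hyb] at h2
    exact hb h2
  · intro p q hpq
    rw [sdiff_adj] at hpq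
    obtain ⟨hpq₁, hpq₂⟩ := hpq
    simp only [comap_adj, Function.Embedding.coe_subtype, fromEdgeSet_adj] at hpq₁
    obtain ⟨hmemtot, hnepq⟩ := hpq₁
    have hpqne : p ≠ q := fun h => hnepq (by rw [h])
    rcases hsplit _ hmemtot with hin | hout | heq
    · exact iff_of_true (hin _ (Sym2.mem_mk_left _ _)) (hin _ (Sym2.mem_mk_right _ _))
    · exact iff_of_false (hout _ (Sym2.mem_mk_left _ _)) (hout _ (Sym2.mem_mk_right _ _))
    · exfalso
      have hsub : s(p, q) = s(x, y) := by
        apply Sym2.map.injective Subtype.val_injective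
        simp only [Sym2.map_pair_eq]
        rw [heq, hxa, hyb]
      exact hpq₂ (by rw [fromEdgeSet_adj]; exact ⟨hsub, hpqne⟩)
lemma singleton_isTree (v : V) (E : Set (Sym2 V)) :
    (SimpleGraph.induce {v} (fromEdgeSet E)).IsTree := by
  have hconn : (SimpleGraph.induce {v} (fromEdgeSet E)).Connected := by
    rw [connected_iff]
    refine ⟨?_, ⟨⟨v, rfl⟩⟩⟩
    intro a b
    have : a = b := Subtype.ext ((Set.mem_singleton_iff.mp a.2).trans
      (Set.mem_singleton_iff.mp b.2).symm)
    subst this; exact SimpleGraph.Reachable.refl _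
  refine ⟨hconn, ?_⟩
  intro a c hc
  cases c with
  | nil => exact hc.ne_nil rfl
  | cons h p =>
    rename_i b
    have hab : (a : V) = (b : V) := (Set.mem_singleton_iff.mp a.2).trans
      (Set.mem_singleton_iff.mp b.2).symm
    simp only [comap_adj, Function.Embedding.coe_subtype, fromEdgeSet_adj] at h
    exact h.2 hab

lemma glue_isTree {E₁ E₂ : Set (Sym2 V)} {S₁ S₂ : Set V}
    (hdisj : ∀ z, z ∈ S₁ → z ∈ S₂ → False)
    (hE₁ : EdgesIn E₁ S₁) (hE₂ : EdgesIn E₂ S₂)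
    (hT₁ : (SimpleGraph.induce S₁ (fromEdgeSet E₁)).IsTree)
    (hT₂ : (SimpleGraph.induce S₂ (fromEdgeSet E₂)).IsTree)
    {a b : V} (ha : a ∈ S₁) (hb : b ∈ S₂) :
    EdgesIn (E₁ ∪ E₂ ∪ {s(a, b)}) (S₁ ∪ S₂) ∧
    (SimpleGraph.induce (S₁ ∪ S₂) (fromEdgeSet (E₁ ∪ E₂ ∪ {s(a, b)}))).IsTree := by
  have hEin : EdgesIn (E₁ ∪ E₂ ∪ {s(a, b)}) (S₁ ∪ S₂) := by
    rintro e (he | he) v hv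
    · rcases he with he | he
      · exact Or.inl (hE₁ _ he _ hv)
      · exact Or.inr (hE₂ _ he _ hv)
    · rw [Set.mem_singleton_iff] at he
      subst he
      rcases Sym2.mem_iff.mp hv with rfl | rfl
      · exact Or.inl ha
      · exact Or.inr hb
  refine ⟨hEin, ?_, ?_⟩
  -- Connectedness
  · have hmemab : s(a, b) ∈ E₁ ∪ E₂ ∪ {s(a, b)} := Or.inr rfl
    have hne_ab : a ≠ b := fun h => hdisj a ha (h ▸ hb)
    have key : ∀ z : ↥(S₁ ∪ S₂),
        (SimpleGraph.induce (S₁ ∪ S₂) (fromEdgeSet (E₁ ∪ E₂ ∪ {s(a, b)}))).Reachable z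
          ⟨a, Or.inl ha⟩ := by
      intro z
      have lift₁ : ∀ u v : ↥S₁, (SimpleGraph.induce S₁ (fromEdgeSet E₁)).Reachable u v →
          (SimpleGraph.induce (S₁ ∪ S₂) (fromEdgeSet (E₁ ∪ E₂ ∪ {s(a, b)}))).Reachable
            ⟨u, Or.inl u.2⟩ ⟨v, Or.inl v.2⟩ := by
        intro u v huv
        exact reach_of_adj_reach (fun w : ↥S₁ => (⟨w, Or.inl w.2⟩ : ↥(S₁ ∪ S₂)))
          (by
            intro p q hpq
            simp only [comap_adj, Function.Embedding.coe_subtype, fromEdgeSet_adj] at hpq ⊢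
            exact Adj.reachable (by
              simp only [comap_adj, Function.Embedding.coe_subtype, fromEdgeSet_adj]
              exact ⟨Or.inl (Or.inl hpq.1), hpq.2⟩)) huv
      have lift₂ : ∀ u v : ↥S₂, (SimpleGraph.induce S₂ (fromEdgeSet E₂)).Reachable u v →
          (SimpleGraph.induce (S₁ ∪ S₂) (fromEdgeSet (E₁ ∪ E₂ ∪ {s(a, b)}))).Reachable
            ⟨u, Or.inr u.2⟩ ⟨v, Or.inr v.2⟩ := by
        intro u v huv
        exact reach_of_adj_reach (fun w : ↥S₂ => (⟨w, Or.inr w.2⟩ : ↥(S₁ ∪ S₂)))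
          (by
            intro p q hpq
            simp only [comap_adj, Function.Embedding.coe_subtype, fromEdgeSet_adj] at hpq ⊢
            exact Adj.reachable (by
              simp only [comap_adj, Function.Embedding.coe_subtype, fromEdgeSet_adj]
              exact ⟨Or.inl (Or.inr hpq.1), hpq.2⟩)) huv
      rcases hz : z.2 with hz1 | hz2
      · have := lift₁ ⟨z, hz1⟩ ⟨a, ha⟩ (hT₁.isConnected.preconnected _ _)
        have hzz : (⟨(⟨z, hz1⟩ : ↥S₁), Or.inl hz1⟩ : ↥(S₁ ∪ S₂)) = z := Subtype.ext rfl
        rwa [hzz] at this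
      · have h2 := lift₂ ⟨z, hz2⟩ ⟨b, hb⟩ (hT₂.isConnected.preconnected _ _)
        have hzz : (⟨(⟨z, hz2⟩ : ↥S₂), Or.inr hz2⟩ : ↥(S₁ ∪ S₂)) = z := Subtype.ext rfl
        rw [hzz] at h2
        refine h2.trans (Adj.reachable ?_)
        simp only [comap_adj, Function.Embedding.coe_subtype, fromEdgeSet_adj]
        exact ⟨by rw [Sym2.eq_swap] at hmemab ⊢ <;> exact hmemab, fun h => hne_ab h.symm⟩
    rw [connected_iff]
    exact ⟨fun u v => (key u).trans (key v).symm, ⟨⟨a, Or.inl ha⟩⟩⟩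
  -- Acyclicity
  · rw [isAcyclic_iff_forall_edge_isBridge]
    intro e he
    revert he
    refine Sym2.ind (fun x y => ?_) e
    intro he
    have hadj := (SimpleGraph.mem_edgeSet _).mp he
    rw [isBridge_iff]
    have hadj' := hadj
    simp only [comap_adj, Function.Embedding.coe_subtype, fromEdgeSet_adj] at hadj'
    obtain ⟨hmem, hne⟩ := hadj'
    have hbnotin₁ : b ∉ S₁ := fun h => hdisj b h hb
    have hanotin₂ : a ∉ S₂ := fun h => hdisj a ha h
    rcases hmem with (hm | hm) | hm
    · -- edge in E₁
      have hx : (x : V) ∈ S₁ := hE₁ _ hm _ (Sym2.mem_mk_left _ _)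
      have hy : (y : V) ∈ S₁ := hE₁ _ hm _ (Sym2.mem_mk_right _ _)
      refine bridge_aux hE₁ hT₁ ha ?_ hx hy hm hne
      rintro e' ((he' | he') | he')
      · exact Or.inl he'
      · exact Or.inr (Or.inl (fun v hv h => hdisj v h (hE₂ _ he' _ hv)))
      · rw [Set.mem_singleton_iff] at he'
        exact Or.inr (Or.inr ⟨b, hbnotin₁, he'⟩)
    · -- edge in E₂
      have hx : (x : V) ∈ S₂ := hE₂ _ hm _ (Sym2.mem_mk_left _ _)
      have hy : (y : V) ∈ S₂ := hE₂ _ hm _ (Sym2.mem_mk_right _ _)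
      refine bridge_aux hE₂ hT₂ hb ?_ hx hy hm hne
      rintro e' ((he' | he') | he')
      · exact Or.inr (Or.inl (fun v hv h => hdisj v (hE₁ _ he' _ hv) h))
      · exact Or.inl he'
      · rw [Set.mem_singleton_iff] at he'
        exact Or.inr (Or.inr ⟨a, hanotin₂, by rw [he', Sym2.eq_swap]⟩)
    · -- the connector edge
      rw [Set.mem_singleton_iff, Sym2.eq_iff] at hm
      have hsplit₁ : ∀ e' ∈ E₁ ∪ E₂ ∪ {s(a, b)},
          (∀ v ∈ e', v ∈ S₁) ∨ (∀ v ∈ e', v ∉ S₁) ∨ e' = s(a, b) := by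
        rintro e' ((he' | he') | he')
        · exact Or.inl (fun v hv => hE₁ _ he' _ hv)
        · exact Or.inr (Or.inl (fun v hv h => hdisj v h (hE₂ _ he' _ hv)))
        · exact Or.inr (Or.inr he')
      have hsplit₂ : ∀ e' ∈ E₁ ∪ E₂ ∪ {s(a, b)},
          (∀ v ∈ e', v ∈ S₂) ∨ (∀ v ∈ e', v ∉ S₂) ∨ e' = s(b, a) := by
        rintro e' ((he' | he') | he')
        · exact Or.inr (Or.inl (fun v hv h => hdisj v (hE₁ _ he' _ hv) h))
        · exact Or.inl (fun v hv => hE₂ _ he' _ hv)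
        · rw [Set.mem_singleton_iff] at he'
          exact Or.inr (Or.inr (by rw [he', Sym2.eq_swap]))
      rcases hm with ⟨hxa, hyb⟩ | ⟨hxb, hya⟩
      · exact cut_aux hsplit₁ ha hbnotin₁ hxa hyb
      · exact cut_aux hsplit₂ hb hanotin₂ hxb hya

lemma map_isTree {φ : V → V} (hφ : Function.Injective φ) {E : Set (Sym2 V)} {S : Set V}
    (hE : EdgesIn E S) (hT : (SimpleGraph.induce S (fromEdgeSet E)).IsTree) :
    EdgesIn (Sym2.map φ '' E) (φ '' S) ∧
    (SimpleGraph.induce (φ '' S) (fromEdgeSet (Sym2.map φ '' E))).IsTree := by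
  constructor
  · rintro e ⟨e₀, he₀, rfl⟩ v hv
    rw [Sym2.mem_map] at hv
    obtain ⟨w, hw, rfl⟩ := hv
    exact ⟨w, hE _ he₀ _ hw, rfl⟩
  · have f : (SimpleGraph.induce S (fromEdgeSet E)) ≃g
        (SimpleGraph.induce (φ '' S) (fromEdgeSet (Sym2.map φ '' E))) := by
      refine ⟨Equiv.Set.image φ S hφ, ?_⟩
      intro u v
      simp only [Equiv.Set.image_apply, comap_adj, Function.Embedding.coe_subtype,
        fromEdgeSet_adj]
      constructor
      · rintro ⟨hm, hne⟩
        have hm' : Sym2.map φ s((u : V), (v : V)) ∈ Sym2.map φ '' E := by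
          rwa [Sym2.map_pair_eq]
        exact ⟨(Sym2.map.injective hφ).mem_set_image.mp hm', fun h => hne (congrArg φ h)⟩
      · rintro ⟨hm, hne⟩
        exact ⟨by rw [← Sym2.map_pair_eq]; exact Set.mem_image_of_mem _ hm, hφ.ne hne⟩
    refine ⟨f.connected_iff.mp hT.isConnected, ?_⟩
    intro v c hc
    have hinj : Function.Injective f.symm.toHom := fun p q h => f.symm.toEquiv.injective h
    exact hT.IsAcyclic (c.map f.symm.toHom) (hc.map hinj)

def hseg_S (c L : ℤ) (N : ℕ) : Set (ℤ × ℤ) := {p | p.2 = c ∧ L ≤ p.1 ∧ p.1 ≤ L + N}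
def hseg_E (c L : ℤ) (N : ℕ) : Set (Sym2 (ℤ × ℤ)) :=
  {e | ∃ x : ℤ, L ≤ x ∧ x < L + N ∧ e = s((x, c), (x + 1, c))}

lemma emptyEdgesIn (S : Set V) : EdgesIn ∅ S := fun e he => absurd he (Set.notMem_empty e)

lemma hseg (c L : ℤ) (N : ℕ) :
    EdgesIn (hseg_E c L N) (hseg_S c L N) ∧
    (SimpleGraph.induce (hseg_S c L N) (fromEdgeSet (hseg_E c L N))).IsTree := by
  induction N with
  | zero =>
    have hSe : hseg_S c L 0 = {((L, c) : ℤ × ℤ)} := by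
      ext ⟨p1, p2⟩
      simp only [hseg_S, Set.mem_setOf_eq, Set.mem_singleton_iff, Prod.mk.injEq,
        Nat.cast_zero]
      omega
    have hEe : hseg_E c L 0 = ∅ := by
      ext e
      simp only [hseg_E, Set.mem_setOf_eq, Set.mem_empty_iff_false, iff_false, not_exists,
        Nat.cast_zero]
      intro x h
      omega
    rw [hSe, hEe]
    exact ⟨emptyEdgesIn _, singleton_isTree _ _⟩
  | succ N ih =>
    obtain ⟨ihE, ihT⟩ := ih
    have hglue := glue_isTree (S₂ := {((L + N + 1 : ℤ), c)}) (E₂ := ∅)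
      (a := ((L + N : ℤ), c)) (b := ((L + N + 1 : ℤ), c))
      (by
        rintro ⟨z1, z2⟩ hz1 hz2
        simp only [hseg_S, Set.mem_setOf_eq] at hz1
        simp only [Set.mem_singleton_iff, Prod.mk.injEq] at hz2
        omega)
      ihE (emptyEdgesIn _) ihT (singleton_isTree _ _)
      (by exact ⟨rfl, by omega, by omega⟩) rfl
    have hSeq : hseg_S c L N ∪ {((L + N + 1 : ℤ), c)} = hseg_S c L (N + 1) := by
      ext ⟨p1, p2⟩
      simp only [hseg_S, Set.mem_union, Set.mem_setOf_eq, Set.mem_singleton_iff,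
        Prod.mk.injEq, Nat.cast_add, Nat.cast_one]
      omega
    have hEeq : hseg_E c L N ∪ ∅ ∪ {s(((L + N : ℤ), c), ((L + N + 1 : ℤ), c))} =
        hseg_E c L (N + 1) := by
      ext e
      simp only [hseg_E, Set.mem_union, Set.mem_setOf_eq, Set.mem_empty_iff_false, or_false,
        Set.mem_singleton_iff, Nat.cast_add, Nat.cast_one]
      constructor
      · rintro (⟨x, h1, h2, rfl⟩ | rfl)
        · exact ⟨x, h1, by omega, rfl⟩
        · exact ⟨L + N, by omega, by omega, rfl⟩
      · rintro ⟨x, h1, h2, rfl⟩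
        by_cases hx : x < L + N
        · exact Or.inl ⟨x, h1, hx, rfl⟩
        · have hxe : x = L + N := by omega
          exact Or.inr (by rw [hxe])
    rw [hSeq, hEeq] at hglue
    exact hglue

def vseg_S (c L : ℤ) (N : ℕ) : Set (ℤ × ℤ) := {p | p.1 = c ∧ L ≤ p.2 ∧ p.2 ≤ L + N}
def vseg_E (c L : ℤ) (N : ℕ) : Set (Sym2 (ℤ × ℤ)) :=
  {e | ∃ y : ℤ, L ≤ y ∧ y < L + N ∧ e = s((c, y), (c, y + 1))}

lemma vseg (c L : ℤ) (N : ℕ) :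
    EdgesIn (vseg_E c L N) (vseg_S c L N) ∧
    (SimpleGraph.induce (vseg_S c L N) (fromEdgeSet (vseg_E c L N))).IsTree := by
  obtain ⟨hE, hT⟩ := hseg c L N
  have h := map_isTree (φ := Prod.swap) Prod.swap_injective hE hT
  have hSeq : Prod.swap '' hseg_S c L N = vseg_S c L N := by
    ext ⟨p1, p2⟩
    constructor
    · rintro ⟨⟨q1, q2⟩, ⟨h1, h2, h3⟩, heq⟩
      rw [Prod.swap_prod_mk] at heq
      rw [← heq]
      exact ⟨h1, h2, h3⟩
    · rintro ⟨h1, h2, h3⟩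
      exact ⟨(p2, p1), ⟨h1, h2, h3⟩, rfl⟩
  have hEeq : Sym2.map Prod.swap '' hseg_E c L N = vseg_E c L N := by
    ext e
    constructor
    · rintro ⟨e₀, ⟨x, h1, h2, rfl⟩, rfl⟩
      exact ⟨x, h1, h2, by rw [Sym2.map_pair_eq]; rfl⟩
    · rintro ⟨y, h1, h2, rfl⟩
      exact ⟨s((y, c), (y + 1, c)), ⟨y, h1, h2, rfl⟩, by rw [Sym2.map_pair_eq]; rfl⟩
  rw [hSeq, hEeq] at h
  exact h

def box (m : ℤ) : Set (ℤ × ℤ) := {p | 0 ≤ p.1 ∧ p.1 < m ∧ 0 ≤ p.2 ∧ p.2 < m}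

def bigE (m : ℤ) (E : Set (Sym2 (ℤ × ℤ))) : Set (Sym2 (ℤ × ℤ)) :=
  (Sym2.map (trP (0, 0)) '' E) ∪
  (Sym2.map (trP (m + 1, 0)) '' E) ∪
  (Sym2.map (fun p => trP (0, m + 1) (reflP m p)) '' E) ∪
  (Sym2.map (fun p => trP (m + 1, m + 1) (reflP m p)) '' E) ∪
  {e | ∃ x : ℤ, 0 ≤ x ∧ x < 2 * m ∧ e = s((x, m), (x + 1, m))} ∪
  {e | ∃ y : ℤ, 0 ≤ y ∧ y < 2 * m ∧ e = s((m, y), (m, y + 1))} ∪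
  {s((m - 1, m - 1), (m - 1, m)), s((m + 1, m - 1), (m + 1, m)),
   s((m - 1, m + 1), (m - 1, m)), s((m + 1, m + 1), (m + 1, m))}

lemma trP_inj (t : ℤ × ℤ) : Function.Injective (trP t) := by
  intro p q h
  simp only [trP, Prod.mk.injEq] at h
  obtain ⟨h1, h2⟩ := h
  rw [Prod.ext_iff]
  exact ⟨by omega, by omega⟩

lemma trP_reflP_inj (t : ℤ × ℤ) (m : ℤ) :
    Function.Injective (fun p => trP t (reflP m p)) := by
  intro p q h
  simp only [trP, reflP, Prod.mk.injEq] at h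
  obtain ⟨h1, h2⟩ := h
  rw [Prod.ext_iff]
  exact ⟨by omega, by omega⟩

lemma step (m : ℤ) (hm : 1 ≤ m) {E : Set (Sym2 (ℤ × ℤ))}
    (hE : EdgesIn E (box m)) (hT : (SimpleGraph.induce (box m) (fromEdgeSet E)).IsTree) :
    EdgesIn (bigE m E) (box (2 * m + 1)) ∧
    (SimpleGraph.induce (box (2 * m + 1)) (fromEdgeSet (bigE m E))).IsTree := by
  obtain ⟨rowE, rowT⟩ := hseg m 0 ((2 * m).toNat)
  obtain ⟨botE, botT⟩ := vseg m 0 ((m - 1).toNat)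
  obtain ⟨topE, topT⟩ := vseg m (m + 1) ((m - 1).toNat)
  have hNr : ((2 * m).toNat : ℤ) = 2 * m := Int.toNat_of_nonneg (by omega)
  have hNa : (((m - 1).toNat : ℤ)) = m - 1 := Int.toNat_of_nonneg (by omega)
  -- quadrant characterizations
  have hQ00 : trP (0, 0) '' box m = box m := by
    have hid : ∀ p : ℤ × ℤ, trP (0, 0) p = p := by
      intro p; simp [trP]
    ext p
    constructor
    · rintro ⟨q, hq, rfl⟩; rwa [hid]
    · intro hp; exact ⟨p, hp, hid p⟩
  have hQ10 : trP (m + 1, 0) '' box m =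
      {p : ℤ × ℤ | m + 1 ≤ p.1 ∧ p.1 ≤ 2 * m ∧ 0 ≤ p.2 ∧ p.2 ≤ m - 1} := by
    ext ⟨p1, p2⟩
    constructor
    · rintro ⟨⟨x, y⟩, hxy, heq⟩
      simp only [box, Set.mem_setOf_eq] at hxy
      rw [← heq]
      simp only [trP, Set.mem_setOf_eq]
      omega
    · intro h
      simp only [Set.mem_setOf_eq] at h
      refine ⟨(p1 - (m + 1), p2), ?_, ?_⟩
      · simp only [box, Set.mem_setOf_eq]; omega
      · simp only [trP, Prod.mk.injEq]; omega
  have hQ01 : (fun p => trP (0, m + 1) (reflP m p)) '' box m =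
      {p : ℤ × ℤ | 0 ≤ p.1 ∧ p.1 ≤ m - 1 ∧ m + 1 ≤ p.2 ∧ p.2 ≤ 2 * m} := by
    ext ⟨p1, p2⟩
    constructor
    · rintro ⟨⟨x, y⟩, hxy, heq⟩
      simp only [box, Set.mem_setOf_eq] at hxy
      rw [← heq]
      simp only [trP, reflP, Set.mem_setOf_eq]
      omega
    · intro h
      simp only [Set.mem_setOf_eq] at h
      refine ⟨(p1, 2 * m - p2), ?_, ?_⟩
      · simp only [box, Set.mem_setOf_eq]; omega
      · simp only [trP, reflP, Prod.mk.injEq]; omega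
  have hQ11 : (fun p => trP (m + 1, m + 1) (reflP m p)) '' box m =
      {p : ℤ × ℤ | m + 1 ≤ p.1 ∧ p.1 ≤ 2 * m ∧ m + 1 ≤ p.2 ∧ p.2 ≤ 2 * m} := by
    ext ⟨p1, p2⟩
    constructor
    · rintro ⟨⟨x, y⟩, hxy, heq⟩
      simp only [box, Set.mem_setOf_eq] at hxy
      rw [← heq]
      simp only [trP, reflP, Set.mem_setOf_eq]
      omega
    · intro h
      simp only [Set.mem_setOf_eq] at h
      refine ⟨(p1 - (m + 1), 2 * m - p2), ?_, ?_⟩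
      · simp only [box, Set.mem_setOf_eq]; omega
      · simp only [trP, reflP, Prod.mk.injEq]; omega
  -- quadrant trees
  have q00 := map_isTree (trP_inj (0, 0)) hE hT
  rw [hQ00] at q00
  have q10 := map_isTree (trP_inj (m + 1, 0)) hE hT
  rw [hQ10] at q10
  have q01 := map_isTree (trP_reflP_inj (0, m + 1) m) hE hT
  rw [hQ01] at q01
  have q11 := map_isTree (trP_reflP_inj (m + 1, m + 1) m) hE hT
  rw [hQ11] at q11
  -- glue 1 : row + bottom arm
  have ha1 : ((m, m) : ℤ × ℤ) ∈ hseg_S m 0 ((2 * m).toNat) := ⟨rfl, by omega, by omega⟩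
  have g1 := glue_isTree
    (by
      rintro ⟨z1, z2⟩ hz1 hz2
      simp only [hseg_S, vseg_S, Set.mem_setOf_eq] at hz1 hz2
      omega)
    rowE botE rowT botT (a := ((m, m) : ℤ × ℤ)) (b := ((m, m - 1) : ℤ × ℤ))
    ha1 ⟨rfl, by omega, by omega⟩
  -- glue 2 : + top arm
  have g2 := glue_isTree
    (by
      rintro ⟨z1, z2⟩ hz1 hz2
      simp only [Set.mem_union, hseg_S, vseg_S, Set.mem_setOf_eq] at hz1 hz2
      omega)
    g1.1 topE g1.2 topT (a := ((m, m) : ℤ × ℤ)) (b := ((m, m + 1) : ℤ × ℤ))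
    (Or.inl ha1) ⟨rfl, by omega, by omega⟩
  -- glue 3 : + quadrant 00
  have g3 := glue_isTree
    (by
      rintro ⟨z1, z2⟩ hz1 hz2
      simp only [Set.mem_union, hseg_S, vseg_S, box, Set.mem_setOf_eq] at hz1 hz2
      omega)
    g2.1 q00.1 g2.2 q00.2 (a := ((m - 1, m) : ℤ × ℤ)) (b := ((m - 1, m - 1) : ℤ × ℤ))
    (Or.inl (Or.inl ⟨rfl, by omega, by omega⟩))
    (by simp only [box, Set.mem_setOf_eq]; omega)
  -- glue 4 : + quadrant 10
  have g4 := glue_isTree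
    (by
      rintro ⟨z1, z2⟩ hz1 hz2
      simp only [Set.mem_union, hseg_S, vseg_S, box, Set.mem_setOf_eq] at hz1 hz2
      omega)
    g3.1 q10.1 g3.2 q10.2 (a := ((m + 1, m) : ℤ × ℤ)) (b := ((m + 1, m - 1) : ℤ × ℤ))
    (Or.inl (Or.inl (Or.inl ⟨rfl, by omega, by omega⟩)))
    (by simp only [Set.mem_setOf_eq]; omega)
  -- glue 5 : + quadrant 01
  have g5 := glue_isTree
    (by
      rintro ⟨z1, z2⟩ hz1 hz2
      simp only [Set.mem_union, hseg_S, vseg_S, box, Set.mem_setOf_eq] at hz1 hz2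
      omega)
    g4.1 q01.1 g4.2 q01.2 (a := ((m - 1, m) : ℤ × ℤ)) (b := ((m - 1, m + 1) : ℤ × ℤ))
    (Or.inl (Or.inl (Or.inl (Or.inl ⟨rfl, by omega, by omega⟩))))
    (by simp only [Set.mem_setOf_eq]; omega)
  -- glue 6 : + quadrant 11
  have g6 := glue_isTree
    (by
      rintro ⟨z1, z2⟩ hz1 hz2
      simp only [Set.mem_union, hseg_S, vseg_S, box, Set.mem_setOf_eq] at hz1 hz2
      omega)
    g5.1 q11.1 g5.2 q11.2 (a := ((m + 1, m) : ℤ × ℤ)) (b := ((m + 1, m + 1) : ℤ × ℤ))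
    (Or.inl (Or.inl (Or.inl (Or.inl (Or.inl ⟨rfl, by omega, by omega⟩)))))
    (by simp only [Set.mem_setOf_eq]; omega)
  obtain ⟨hEfin, hTfin⟩ := g6
  have hSeq : (((((hseg_S m 0 ((2 * m).toNat) ∪ vseg_S m 0 ((m - 1).toNat)) ∪
      vseg_S m (m + 1) ((m - 1).toNat)) ∪ box m) ∪
      {p : ℤ × ℤ | m + 1 ≤ p.1 ∧ p.1 ≤ 2 * m ∧ 0 ≤ p.2 ∧ p.2 ≤ m - 1}) ∪
      {p : ℤ × ℤ | 0 ≤ p.1 ∧ p.1 ≤ m - 1 ∧ m + 1 ≤ p.2 ∧ p.2 ≤ 2 * m}) ∪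
      {p : ℤ × ℤ | m + 1 ≤ p.1 ∧ p.1 ≤ 2 * m ∧ m + 1 ≤ p.2 ∧ p.2 ≤ 2 * m} =
      box (2 * m + 1) := by
    ext ⟨p1, p2⟩
    simp only [Set.mem_union, hseg_S, vseg_S, box, Set.mem_setOf_eq]
    omega
  have hEeq : (((((hseg_E m 0 ((2 * m).toNat) ∪ vseg_E m 0 ((m - 1).toNat) ∪
        {s(((m, m) : ℤ × ℤ), ((m, m - 1) : ℤ × ℤ))}) ∪ vseg_E m (m + 1) ((m - 1).toNat) ∪
        {s(((m, m) : ℤ × ℤ), ((m, m + 1) : ℤ × ℤ))}) ∪ (Sym2.map (trP (0, 0)) '' E) ∪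
        {s(((m - 1, m) : ℤ × ℤ), ((m - 1, m - 1) : ℤ × ℤ))}) ∪
        (Sym2.map (trP (m + 1, 0)) '' E) ∪
        {s(((m + 1, m) : ℤ × ℤ), ((m + 1, m - 1) : ℤ × ℤ))}) ∪
        (Sym2.map (fun p => trP (0, m + 1) (reflP m p)) '' E) ∪
        {s(((m - 1, m) : ℤ × ℤ), ((m - 1, m + 1) : ℤ × ℤ))}) ∪
        (Sym2.map (fun p => trP (m + 1, m + 1) (reflP m p)) '' E) ∪
        {s(((m + 1, m) : ℤ × ℤ), ((m + 1, m + 1) : ℤ × ℤ))} = bigE m E := by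
    ext e
    simp only [bigE, hseg_E, vseg_E, Set.mem_union, Set.mem_setOf_eq, Set.mem_singleton_iff,
      Set.mem_insert_iff]
    constructor
    · rintro ((((((((((((hrow | hbot) | hcb) | htop) | hct) | h1) | hc1) | h2) | hc2) | h3)
        | hc3) | h4) | hc4)
      · obtain ⟨x, hx1, hx2, rfl⟩ := hrow
        exact Or.inl (Or.inl (Or.inr ⟨x, hx1, by omega, rfl⟩))
      · obtain ⟨y, hy1, hy2, rfl⟩ := hbot
        exact Or.inl (Or.inr ⟨y, hy1, by omega, rfl⟩)
      · exact Or.inl (Or.inr ⟨m - 1, by omega, by omega,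
          by rw [hcb, show m - 1 + 1 = m by ring]; exact Sym2.eq_swap⟩)
      · obtain ⟨y, hy1, hy2, rfl⟩ := htop
        exact Or.inl (Or.inr ⟨y, by omega, by omega, rfl⟩)
      · exact Or.inl (Or.inr ⟨m, by omega, by omega, hct⟩)
      · exact Or.inl (Or.inl (Or.inl (Or.inl (Or.inl (Or.inl h1)))))
      · exact Or.inr (Or.inl (by rw [hc1]; exact Sym2.eq_swap))
      · exact Or.inl (Or.inl (Or.inl (Or.inl (Or.inl (Or.inr h2)))))
      · exact Or.inr (Or.inr (Or.inl (by rw [hc2]; exact Sym2.eq_swap)))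
      · exact Or.inl (Or.inl (Or.inl (Or.inl (Or.inr h3))))
      · exact Or.inr (Or.inr (Or.inr (Or.inl (by rw [hc3]; exact Sym2.eq_swap))))
      · exact Or.inl (Or.inl (Or.inl (Or.inr h4)))
      · exact Or.inr (Or.inr (Or.inr (Or.inr (by rw [hc4]; exact Sym2.eq_swap))))
    · rintro ((((((h1 | h2) | h3) | h4) | hrow) | hcol) | (hc1 | hc2 | hc3 | hc4))
      · exact Or.inl (Or.inl (Or.inl (Or.inl (Or.inl (Or.inl (Or.inl (Or.inr h1)))))))
      · exact Or.inl (Or.inl (Or.inl (Or.inl (Or.inl (Or.inr h2)))))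
      · exact Or.inl (Or.inl (Or.inl (Or.inr h3)))
      · exact Or.inl (Or.inr h4)
      · obtain ⟨x, hx1, hx2, rfl⟩ := hrow
        exact Or.inl (Or.inl (Or.inl (Or.inl (Or.inl (Or.inl (Or.inl (Or.inl (Or.inl
          (Or.inl (Or.inl (Or.inl ⟨x, hx1, by omega, rfl⟩)))))))))))
      · obtain ⟨y, hy1, hy2, rfl⟩ := hcol
        rcases lt_trichotomy y (m - 1) with hy | hy | hy
        · exact Or.inl (Or.inl (Or.inl (Or.inl (Or.inl (Or.inl (Or.inl (Or.inl (Or.inl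
            (Or.inl (Or.inl (Or.inr ⟨y, hy1, by omega, rfl⟩)))))))))))
        · subst hy
          exact Or.inl (Or.inl (Or.inl (Or.inl (Or.inl (Or.inl (Or.inl (Or.inl (Or.inl
            (Or.inl (Or.inr (by rw [show m - 1 + 1 = m by ring]; exact Sym2.eq_swap)))))))))))
        · rcases eq_or_lt_of_le (by omega : m ≤ y) with hy2' | hy2'
          · exact Or.inl (Or.inl (Or.inl (Or.inl (Or.inl (Or.inl (Or.inl (Or.inl
              (Or.inr (by rw [← hy2'])))))))))
          · exact Or.inl (Or.inl (Or.inl (Or.inl (Or.inl (Or.inl (Or.inl (Or.inl (Or.inl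
              (Or.inr ⟨y, by omega, by omega, rfl⟩)))))))))
      · exact Or.inl (Or.inl (Or.inl (Or.inl (Or.inl (Or.inl (Or.inr
          (by rw [hc1]; exact Sym2.eq_swap)))))))
      · exact Or.inl (Or.inl (Or.inl (Or.inl (Or.inr (by rw [hc2]; exact Sym2.eq_swap)))))
      · exact Or.inl (Or.inl (Or.inr (by rw [hc3]; exact Sym2.eq_swap)))
      · exact Or.inr (by rw [hc4]; exact Sym2.eq_swap)
  rw [hSeq, hEeq] at hEfin hTfin
  exact ⟨hEfin, hTfin⟩

lemma frag_main (n : ℕ) (hn : 1 ≤ n) :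
    EdgesIn (fragEdges n) (fragVerts n) ∧
    (SimpleGraph.induce (fragVerts n) (fromEdgeSet (fragEdges n))).IsTree := by
  induction n, hn using Nat.le_induction with
  | base =>
    have hV : fragVerts 1 = {((0 : ℤ), (0 : ℤ))} := by
      ext ⟨p1, p2⟩
      simp only [fragVerts, Set.mem_setOf_eq, Set.mem_singleton_iff, Prod.mk.injEq, pow_one]
      omega
    have hEq : fragEdges 1 = ∅ := rfl
    rw [hV, hEq]
    exact ⟨emptyEdgesIn _, singleton_isTree _ _⟩
  | succ n hn ih =>
    obtain ⟨k, rfl⟩ : ∃ k, n = k + 1 := ⟨n - 1, by omega⟩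
    have hm : (1 : ℤ) ≤ 2 ^ (k + 1) - 1 := by
      have h2 : (2 : ℤ) ≤ 2 ^ (k + 1) := by
        calc (2 : ℤ) = 2 ^ 1 := (pow_one 2).symm
        _ ≤ 2 ^ (k + 1) := pow_le_pow_right₀ (by norm_num) (by omega)
      omega
    have hEbox : EdgesIn (fragEdges (k + 1)) (box (2 ^ (k + 1) - 1)) := ih.1
    have hTbox : (SimpleGraph.induce (box (2 ^ (k + 1) - 1))
        (fromEdgeSet (fragEdges (k + 1)))).IsTree := ih.2
    have hs := step (2 ^ (k + 1) - 1) hm hEbox hTbox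
    have hveq : box (2 * (2 ^ (k + 1) - 1) + 1) = fragVerts (k + 2) := by
      have h : 2 * ((2 : ℤ) ^ (k + 1) - 1) + 1 = 2 ^ (k + 2) - 1 := by
        rw [pow_succ]
        ring
      rw [h]
      rfl
    have heeq : bigE (2 ^ (k + 1) - 1) (fragEdges (k + 1)) = fragEdges (k + 2) := rfl
    rw [hveq, heeq] at hs
    exact hs

/-- For every `n ≥ 1`, the `n`-th fragment is a tree (connected and acyclic)
spanning all `(2^n − 1)²` vertices of the `(2^n−1) × (2^n−1)` grid square. -/
theorem fragment_isTree (n : ℕ) (hn : 1 ≤ n) :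
    (SimpleGraph.fromEdgeSet
        (Sym2.map (fun p : fragVerts n => (p : ℤ × ℤ)) ⁻¹' fragEdges n)).IsTree
    ∧ Nat.card (fragVerts n) = (2 ^ n - 1) ^ 2 := by
  obtain ⟨hEin, hT⟩ := frag_main n hn
  constructor
  · have hgr : SimpleGraph.fromEdgeSet
        (Sym2.map (fun p : fragVerts n => (p : ℤ × ℤ)) ⁻¹' fragEdges n) =
        SimpleGraph.induce (fragVerts n) (fromEdgeSet (fragEdges n)) := by
      ext a b
      simp only [fromEdgeSet_adj, Set.mem_preimage, Sym2.map_pair_eq, comap_adj,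
        Function.Embedding.coe_subtype]
      constructor
      · rintro ⟨hm, hne⟩
        exact ⟨hm, fun h => hne (Subtype.ext h)⟩
      · rintro ⟨hm, hne⟩
        exact ⟨hm, fun h => hne (congrArg Subtype.val h)⟩
    rw [hgr]
    exact hT
  · have hVeq : fragVerts n =
        (Set.Ico (0 : ℤ) (2 ^ n - 1)) ×ˢ (Set.Ico (0 : ℤ) (2 ^ n - 1)) := by
      ext ⟨p1, p2⟩
      simp only [fragVerts, Set.mem_setOf_eq, Set.mem_prod, Set.mem_Ico]
      tauto
    rw [hVeq]
    have hIco : Nat.card (Set.Ico (0 : ℤ) (2 ^ n - 1)) = 2 ^ n - 1 := by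
      rw [Nat.card_coe_set_eq, ← Finset.coe_Ico, Set.ncard_coe_finset, Int.card_Ico]
      have hc : ((2 ^ n : ℕ) : ℤ) = 2 ^ n := by push_cast; rfl
      omega
    rw [Nat.card_congr (Equiv.Set.prod _ _), Nat.card_prod, hIco, sq]
end

section
/- Let (v_n) be a sequence of stationary integer-valued random vector fields on ℤ² such that (a) ℙ((div v_n)_x = 1) → 1 as n → ∞ for every vertex x, and (b) for every edge y, sup_n ℙ(|(v_n)_y| > C) → 0 as C → ∞. Then there exists a stationary random vector field v on ℤ² with ℙ((div v)_x = 1) = 1 for every vertex x, and ℙ(|v_y| > C) ≤ sup_n ℙ(|(v_n)_y| > C) for every C and every edge y. -/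
open MeasureTheory Filter Topology

/-- Shift (translate) an integer vector field on `ℤ²` by `t`; `w p b` is the
value on the edge going out of `p` rightward (`b = true`) or upward
(`b = false`). -/
def shiftF (t : ℤ × ℤ) (w : ℤ × ℤ → Bool → ℤ) : ℤ × ℤ → Bool → ℤ :=
  fun p b => w (p.1 + t.1, p.2 + t.2) b

/-- The divergence at a vertex `p` of an integer vector field on `ℤ²`:
the sum of the field over the four edges oriented out of `p`. -/
def divB (w : ℤ × ℤ → Bool → ℤ) (p : ℤ × ℤ) : ℤ :=
  w p true + w p false - w (p.1 - 1, p.2) true - w (p.1, p.2 - 1) false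

open Set
open scoped ENNReal NNReal

set_option linter.unusedVariables false


namespace LimAux

/-! ### Instances for `OnePoint ℤ` -/

abbrev OZ := OnePoint ℤ

instance : Countable OZ := inferInstanceAs (Countable (Option ℤ))

instance : MeasurableSpace OZ := ⊤

instance : BorelSpace OZ := ⟨borel_eq_top_of_countable.symm⟩

lemma isClopen_singleton_coe (k : ℤ) : IsClopen ({((k : ℤ) : OZ)} : Set OZ) := by
  refine ⟨isClosed_singleton, ?_⟩
  rw [OnePoint.isOpen_iff_of_notMem (by simp [eq_comm])]
  exact isOpen_discrete _

instance : SecondCountableTopology OZ := by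
  refine ⟨⟨(Set.range fun k : ℤ => ({((k : ℤ) : OZ)} : Set OZ)) ∪
      (Set.range fun F : Finset ℤ => ((fun k : ℤ => ((k : ℤ) : OZ)) '' (F : Set ℤ))ᶜ), ?_, ?_⟩⟩
  · exact (Set.countable_range _).union (Set.countable_range _)
  · refine (TopologicalSpace.isTopologicalBasis_of_isOpen_of_nhds ?_ ?_).eq_generateFrom
    · rintro U (⟨k, rfl⟩ | ⟨F, rfl⟩)
      · exact (isClopen_singleton_coe k).2
      · rw [isOpen_compl_iff, OnePoint.isClosed_image_coe]
        exact ⟨isClosed_discrete _, F.finite_toSet.isCompact⟩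
    · intro a U haU hU
      induction a using OnePoint.rec with
      | infty =>
          have h1 := (OnePoint.isOpen_iff_of_mem haU).1 hU
          have hfin : ((OnePoint.some ⁻¹' U : Set ℤ)ᶜ).Finite := h1.2.finite_of_discrete
          refine ⟨((fun k : ℤ => ((k : ℤ) : OZ)) '' (hfin.toFinset : Set ℤ))ᶜ,
            Or.inr ⟨hfin.toFinset, rfl⟩, ?_, ?_⟩
          · simp only [Set.mem_compl_iff, Set.mem_image]
            rintro ⟨k, -, hk⟩
            exact (OnePoint.coe_ne_infty k) hk
          · intro z hz
            induction z using OnePoint.rec with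
            | infty => exact haU
            | coe k =>
                simp only [Set.mem_compl_iff, Set.mem_image, Set.Finite.coe_toFinset] at hz
                by_contra hkU
                exact hz ⟨k, by simpa using hkU, rfl⟩
      | coe k => exact ⟨{((k : ℤ) : OZ)}, Or.inl ⟨k, rfl⟩, rfl, by simpa using haU⟩

instance : TotallyDisconnectedSpace OZ := by
  refine ⟨fun s _ hs => ?_⟩
  intro x hx y hy
  by_contra hxy
  have key : ∀ (k : ℤ), ((k : ℤ) : OZ) ∈ s → s ⊆ {((k : ℤ) : OZ)} := fun k hk =>
    hs.subset_isClopen (isClopen_singleton_coe k) ⟨_, hk, rfl⟩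
  induction x using OnePoint.rec with
  | infty =>
      induction y using OnePoint.rec with
      | infty => exact hxy rfl
      | coe k =>
          have := Set.mem_singleton_iff.mp (key k hy hx)
          exact (OnePoint.infty_ne_coe k) this
  | coe k =>
      exact hxy (Set.mem_singleton_iff.mp (key k hx hy)).symm

end LimAux

section ClopenContent

open TopologicalSpace

variable {G : Type*} [TopologicalSpace G] [CompactSpace G] [T2Space G]
  [TotallyDisconnectedSpace G]

theorem LimAux.exists_isClopen_separating {K₁ K₂ : Set G} (h₁ : IsCompact K₁)
    (h₂ : IsClosed K₂) (hd : Disjoint K₁ K₂) :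
    ∃ W, IsClopen W ∧ K₁ ⊆ W ∧ Disjoint W K₂ := by
  have hx : ∀ x : G, x ∈ K₁ → ∃ V : Set G, IsClopen V ∧ x ∈ V ∧ V ⊆ K₂ᶜ := by
    intro x hxK
    exact compact_exists_isClopen_in_isOpen h₂.isOpen_compl
      (Set.disjoint_left.1 hd hxK)
  choose! V hV using hx
  obtain ⟨t, ht⟩ := h₁.elim_finite_subcover (fun x : K₁ => V x)
    (fun x => (hV x x.2).1.2) (fun y hy => Set.mem_iUnion.2 ⟨⟨y, hy⟩, (hV y hy).2.1⟩)
  refine ⟨⋃ x ∈ t, V x, isClopen_biUnion_finset (fun x _ => (hV x x.2).1), ?_, ?_⟩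
  · intro y hy
    obtain ⟨x, hxt, hyx⟩ := Set.mem_iUnion₂.1 (ht hy)
    exact Set.mem_biUnion hxt hyx
  · rw [Set.disjoint_left]
    intro y hy
    obtain ⟨x, -, hyx⟩ := Set.mem_iUnion₂.1 hy
    exact fun hyK => (hV x x.2).2.2 hyx hyK

/-- The `ℝ≥0∞`-valued infimum of `ψ` over clopen supersets. -/
noncomputable def LimAux.Phi (ψ : Set G → ℝ≥0∞) (K : Set G) : ℝ≥0∞ :=
  ⨅ (D : Set G) (_ : IsClopen D ∧ K ⊆ D), ψ D

set_option linter.unusedSectionVars false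

namespace LimAux

variable (ψ : Set G → ℝ≥0∞)

theorem Phi_le_one (hle1 : ∀ A, ψ A ≤ 1) (K : Set G) : Phi ψ K ≤ 1 :=
  (iInf₂_le Set.univ ⟨isClopen_univ, Set.subset_univ _⟩).trans (hle1 _)

theorem Phi_ne_top (hle1 : ∀ A, ψ A ≤ 1) (K : Set G) : Phi ψ K ≠ ⊤ :=
  fun h => by simpa [h] using Phi_le_one ψ hle1 K

theorem Phi_mono {K₁ K₂ : Set G} (h : K₁ ⊆ K₂) : Phi ψ K₁ ≤ Phi ψ K₂ :=
  le_iInf₂ fun D hD => iInf₂_le_of_le D ⟨hD.1, h.trans hD.2⟩ le_rfl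

theorem Phi_clopen (hmono : ∀ {A B : Set G}, A ⊆ B → ψ A ≤ ψ B)
    {C : Set G} (hC : IsClopen C) : Phi ψ C = ψ C :=
  le_antisymm (iInf₂_le C ⟨hC, subset_rfl⟩) (le_iInf₂ fun _ hD => hmono hD.2)

theorem psi_union_le (hmono : ∀ {A B : Set G}, A ⊆ B → ψ A ≤ ψ B)
    (hadd : ∀ A B : Set G, IsClopen A → IsClopen B → Disjoint A B → ψ (A ∪ B) = ψ A + ψ B)
    (A B : Set G) (hA : IsClopen A) (hB : IsClopen B) :
    ψ (A ∪ B) ≤ ψ A + ψ B := by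
  have h1 : A ∪ B = A ∪ (B \ A) := (Set.union_diff_self).symm
  rw [h1, hadd A (B \ A) hA (hB.diff hA) Set.disjoint_sdiff_right]
  exact add_le_add le_rfl (hmono Set.diff_subset)

theorem Phi_union_le (hmono : ∀ {A B : Set G}, A ⊆ B → ψ A ≤ ψ B)
    (hadd : ∀ A B : Set G, IsClopen A → IsClopen B → Disjoint A B → ψ (A ∪ B) = ψ A + ψ B)
    (K₁ K₂ : Set G) : Phi ψ (K₁ ∪ K₂) ≤ Phi ψ K₁ + Phi ψ K₂ := by
  have key : ∀ D₁ D₂ : Set G, (IsClopen D₁ ∧ K₁ ⊆ D₁) → (IsClopen D₂ ∧ K₂ ⊆ D₂) →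
      Phi ψ (K₁ ∪ K₂) ≤ ψ D₁ + ψ D₂ := by
    intro D₁ D₂ h₁ h₂
    refine (iInf₂_le (D₁ ∪ D₂) ⟨h₁.1.union h₂.1, Set.union_subset_union h₁.2 h₂.2⟩).trans ?_
    exact psi_union_le ψ hmono hadd D₁ D₂ h₁.1 h₂.1
  have h2 : Phi ψ (K₁ ∪ K₂) ≤ ⨅ (D₁ : Set G) (_ : IsClopen D₁ ∧ K₁ ⊆ D₁)
      (D₂ : Set G) (_ : IsClopen D₂ ∧ K₂ ⊆ D₂), ψ D₁ + ψ D₂ :=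
    le_iInf₂ fun D₁ h₁ => le_iInf₂ fun D₂ h₂ => key D₁ D₂ h₁ h₂
  refine h2.trans (le_of_eq ?_)
  rw [Phi, Phi, ENNReal.iInf_add]
  refine iInf_congr fun D₁ => ?_
  rw [ENNReal.iInf_add]
  refine iInf_congr fun h₁ => ?_
  rw [ENNReal.add_iInf]
  refine iInf_congr fun D₂ => ?_
  rw [ENNReal.add_iInf]

theorem Phi_disjoint_add (hmono : ∀ {A B : Set G}, A ⊆ B → ψ A ≤ ψ B)
    (hadd : ∀ A B : Set G, IsClopen A → IsClopen B → Disjoint A B → ψ (A ∪ B) = ψ A + ψ B)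
    {K₁ K₂ : Set G} (h₁ : IsCompact K₁) (h₂ : IsClosed K₂)
    (hd : Disjoint K₁ K₂) : Phi ψ (K₁ ∪ K₂) = Phi ψ K₁ + Phi ψ K₂ := by
  refine le_antisymm (Phi_union_le ψ hmono hadd K₁ K₂) ?_
  obtain ⟨W, hW, hKW, hWK⟩ := exists_isClopen_separating h₁ h₂ hd
  refine le_iInf₂ fun D hD => ?_
  have hDW : IsClopen (D ∩ W) := hD.1.inter hW
  have hDWc : IsClopen (D ∩ Wᶜ) := hD.1.inter hW.compl
  have hsplit : D = (D ∩ W) ∪ (D ∩ Wᶜ) := by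
    rw [← Set.inter_union_distrib_left, Set.union_compl_self, Set.inter_univ]
  have hdisj : Disjoint (D ∩ W) (D ∩ Wᶜ) :=
    Set.disjoint_of_subset Set.inter_subset_right Set.inter_subset_right
      disjoint_compl_right
  have h1 : Phi ψ K₁ ≤ ψ (D ∩ W) :=
    iInf₂_le (D ∩ W) ⟨hDW, Set.subset_inter ((Set.subset_union_left).trans hD.2) hKW⟩
  have h2 : Phi ψ K₂ ≤ ψ (D ∩ Wᶜ) := by
    refine iInf₂_le (D ∩ Wᶜ) ⟨hDWc, Set.subset_inter ((Set.subset_union_right).trans hD.2) ?_⟩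
    exact Set.subset_compl_iff_disjoint_left.2 hWK
  calc Phi ψ K₁ + Phi ψ K₂ ≤ ψ (D ∩ W) + ψ (D ∩ Wᶜ) := add_le_add h1 h2
    _ = ψ D := by rw [← hadd _ _ hDW hDWc hdisj, ← hsplit]

/-- The content associated to `ψ`. -/
noncomputable def clopenContent (hmono : ∀ {A B : Set G}, A ⊆ B → ψ A ≤ ψ B)
    (hadd : ∀ A B : Set G, IsClopen A → IsClopen B → Disjoint A B → ψ (A ∪ B) = ψ A + ψ B)
    (hle1 : ∀ A, ψ A ≤ 1) : Content G where
  toFun K := (Phi ψ (K : Set G)).toNNReal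
  mono' K₁ K₂ h := ENNReal.toNNReal_mono (Phi_ne_top ψ hle1 _) (Phi_mono ψ h)
  sup_disjoint' K₁ K₂ hd _ hc₂ := by
    have h := Phi_disjoint_add ψ hmono hadd K₁.2 hc₂ hd
    simp only [Compacts.coe_sup]
    rw [show Phi ψ ((K₁ : Set G) ∪ (K₂ : Set G)) = Phi ψ (K₁ : Set G) + Phi ψ (K₂ : Set G) from h,
      ENNReal.toNNReal_add (Phi_ne_top ψ hle1 _) (Phi_ne_top ψ hle1 _)]
  sup_le' K₁ K₂ := by
    simp only [Compacts.coe_sup]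
    refine le_trans (ENNReal.toNNReal_mono ?_ (Phi_union_le ψ hmono hadd K₁ K₂)) ?_
    · exact ENNReal.add_ne_top.2 ⟨Phi_ne_top ψ hle1 _, Phi_ne_top ψ hle1 _⟩
    · rw [ENNReal.toNNReal_add (Phi_ne_top ψ hle1 _) (Phi_ne_top ψ hle1 _)]

theorem clopenContent_apply (hmono : ∀ {A B : Set G}, A ⊆ B → ψ A ≤ ψ B)
    (hadd : ∀ A B : Set G, IsClopen A → IsClopen B → Disjoint A B → ψ (A ∪ B) = ψ A + ψ B)
    (hle1 : ∀ A, ψ A ≤ 1) (K : Compacts G) :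
    (clopenContent ψ hmono hadd hle1 : Content G) K = Phi ψ (K : Set G) := by
  show (((Phi ψ (K : Set G)).toNNReal : ℝ≥0) : ℝ≥0∞) = Phi ψ (K : Set G)
  exact ENNReal.coe_toNNReal (Phi_ne_top ψ hle1 _)

theorem clopenContent_measure_clopen [MeasurableSpace G] [BorelSpace G]
    (hmono : ∀ {A B : Set G}, A ⊆ B → ψ A ≤ ψ B)
    (hadd : ∀ A B : Set G, IsClopen A → IsClopen B → Disjoint A B → ψ (A ∪ B) = ψ A + ψ B)
    (hle1 : ∀ A, ψ A ≤ 1)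
    {C : Set G} (hC : IsClopen C) :
    (clopenContent ψ hmono hadd hle1).measure C = ψ C := by
  rw [Content.measure_apply _ hC.2.measurableSet,
    (clopenContent ψ hmono hadd hle1).outerMeasure_of_isOpen C hC.2,
    (clopenContent ψ hmono hadd hle1).innerContent_of_isCompact hC.1.isCompact hC.2,
    clopenContent_apply]
  exact Phi_clopen ψ hmono hC

end LimAux

end ClopenContent

namespace LimAux

/-- The compactified configuration space. -/
abbrev XX := (ℤ × ℤ) → Bool → OZ

/-- Embedding of integer fields into the compactified space. -/
def emb : ((ℤ × ℤ) → Bool → ℤ) → XX := fun w p b => ((w p b : ℤ) : OZ)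

/-- Retraction sending `∞` to `0`. -/
def ret : XX → ((ℤ × ℤ) → Bool → ℤ) := fun z p b => (z p b).elim 0 id

/-- The shift on the compactified space. -/
def sigmaSh (t : ℤ × ℤ) : XX → XX := fun z p b => z (p.1 + t.1, p.2 + t.2) b

/-- Point cylinder. -/
def cylPt (y : (ℤ × ℤ) × Bool) (k : ℤ) : Set XX := {z | z y.1 y.2 = ((k : ℤ) : OZ)}

/-- Finite-value cylinder. -/
def ball (y : (ℤ × ℤ) × Bool) (C : ℕ) : Set XX :=
  ⋃ k ∈ Finset.Icc (-(C : ℤ)) (C : ℤ), cylPt y k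

/-- Truncated divergence-one event. -/
def divSet (x : ℤ × ℤ) (C : ℕ) : Set XX :=
  ⋃ q ∈ Finset.filter (fun q : (ℤ × ℤ) × (ℤ × ℤ) => q.1.1 + q.1.2 - q.2.1 - q.2.2 = 1)
      ((Finset.Icc (-(C : ℤ)) (C : ℤ) ×ˢ Finset.Icc (-(C : ℤ)) (C : ℤ)) ×ˢ
        (Finset.Icc (-(C : ℤ)) (C : ℤ) ×ˢ Finset.Icc (-(C : ℤ)) (C : ℤ))),
    (cylPt (x, true) q.1.1 ∩ cylPt (x, false) q.1.2 ∩
      cylPt ((x.1 - 1, x.2), true) q.2.1 ∩ cylPt ((x.1, x.2 - 1), false) q.2.2)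

lemma measurable_eval (y : (ℤ × ℤ) × Bool) :
    Measurable fun w : (ℤ × ℤ) → Bool → ℤ => w y.1 y.2 :=
  (measurable_pi_apply y.2).comp (measurable_pi_apply y.1)

lemma measurable_emb : Measurable emb := by
  refine measurable_pi_lambda _ fun p => measurable_pi_lambda _ fun b => ?_
  refine measurable_to_countable' fun z => ?_
  induction z using OnePoint.rec with
  | infty =>
      have h : (fun c : (ℤ × ℤ) → Bool → ℤ => emb c p b) ⁻¹' {OnePoint.infty} = ∅ := by
        ext w; simp [emb, OnePoint.coe_ne_infty]
      rw [h]; exact MeasurableSet.empty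
  | coe k =>
      have h : (fun c : (ℤ × ℤ) → Bool → ℤ => emb c p b) ⁻¹' {((k : ℤ) : OZ)}
          = (fun w : (ℤ × ℤ) → Bool → ℤ => w p b) ⁻¹' {k} := by
        ext w; simp [emb, OnePoint.coe_eq_coe]
      rw [h]
      exact measurable_eval ((p, b)) (measurableSet_singleton k)

lemma measurable_ret : Measurable ret := by
  refine measurable_pi_lambda _ fun p => measurable_pi_lambda _ fun b => ?_
  have h1 : Measurable fun z : XX => z p b :=
    (measurable_pi_apply b).comp (measurable_pi_apply p)
  exact (measurable_from_top (f := fun z : OZ => z.elim 0 id)).comp h1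

lemma continuous_sigmaSh (t : ℤ × ℤ) : Continuous (sigmaSh t) :=
  continuous_pi fun p => continuous_pi fun b =>
    (continuous_apply b).comp (continuous_apply (p.1 + t.1, p.2 + t.2))

lemma measurable_sigmaSh (t : ℤ × ℤ) : Measurable (sigmaSh t) :=
  (continuous_sigmaSh t).measurable

lemma measurable_shiftF (t : ℤ × ℤ) : Measurable (shiftF t) :=
  measurable_pi_lambda _ fun p => measurable_pi_lambda _ fun b =>
    measurable_eval (((p.1 + t.1, p.2 + t.2), b))

lemma measurableSet_divB (x : ℤ × ℤ) :
    MeasurableSet {w : (ℤ × ℤ) → Bool → ℤ | divB w x = 1} := by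
  have h : Measurable fun w : (ℤ × ℤ) → Bool → ℤ => divB w x :=
    (((measurable_eval (x, true)).add (measurable_eval (x, false))).sub
      (measurable_eval ((x.1 - 1, x.2), true))).sub
      (measurable_eval ((x.1, x.2 - 1), false))
  exact h (measurableSet_singleton 1)

lemma measurableSet_tail (C : ℕ) (y : (ℤ × ℤ) × Bool) :
    MeasurableSet {w : (ℤ × ℤ) → Bool → ℤ | (C : ℤ) < |w y.1 y.2|} := by
  have h : MeasurableSet {k : ℤ | (C : ℤ) < |k|} := trivial
  exact measurable_eval y h

lemma isClopen_cylPt (y : (ℤ × ℤ) × Bool) (k : ℤ) : IsClopen (cylPt y k) :=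
  (isClopen_singleton_coe k).preimage
    ((continuous_apply y.2).comp (continuous_apply y.1))

lemma isClopen_ball (y : (ℤ × ℤ) × Bool) (C : ℕ) : IsClopen (ball y C) :=
  isClopen_biUnion_finset fun k _ => isClopen_cylPt y k

lemma isClopen_divSet (x : ℤ × ℤ) (C : ℕ) : IsClopen (divSet x C) :=
  isClopen_biUnion_finset fun q _ =>
    (((isClopen_cylPt _ _).inter (isClopen_cylPt _ _)).inter (isClopen_cylPt _ _)).inter
      (isClopen_cylPt _ _)

lemma ret_eq_of {z : XX} {p : ℤ × ℤ} {b : Bool} {k : ℤ} (h : z p b = ((k : ℤ) : OZ)) :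
    ret z p b = k := by
  simp only [ret, h]; rfl

lemma mem_ball_iff {y : (ℤ × ℤ) × Bool} {C : ℕ} {z : XX} :
    z ∈ ball y C ↔ ∃ k : ℤ, |k| ≤ (C : ℤ) ∧ z y.1 y.2 = ((k : ℤ) : OZ) := by
  simp only [ball, Set.mem_iUnion, Finset.mem_Icc, cylPt, Set.mem_setOf_eq, ← abs_le,
    exists_prop]

lemma emb_mem_ball {w : (ℤ × ℤ) → Bool → ℤ} {y : (ℤ × ℤ) × Bool} {C : ℕ}
    (h : |w y.1 y.2| ≤ (C : ℤ)) : emb w ∈ ball y C :=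
  mem_ball_iff.2 ⟨w y.1 y.2, h, rfl⟩

lemma ret_tail_subset (C : ℕ) (y : (ℤ × ℤ) × Bool) :
    ret ⁻¹' {w : (ℤ × ℤ) → Bool → ℤ | (C : ℤ) < |w y.1 y.2|} ⊆ (ball y C)ᶜ := by
  intro z hz hmem
  obtain ⟨k, hk, hzk⟩ := mem_ball_iff.1 hmem
  have h1 : ret z y.1 y.2 = k := ret_eq_of hzk
  have h2 : (C : ℤ) < |ret z y.1 y.2| := hz
  rw [h1] at h2
  exact absurd h2 (not_lt.2 hk)

lemma emb_ball_compl_subset (n : ℕ) (C : ℕ) (y : (ℤ × ℤ) × Bool)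
    {w : (ℤ × ℤ) → Bool → ℤ} (h : emb w ∈ (ball y C)ᶜ) : (C : ℤ) < |w y.1 y.2| := by
  by_contra hc
  exact h (emb_mem_ball (not_lt.1 hc))

lemma divSet_subset (x : ℤ × ℤ) (C : ℕ) :
    divSet x C ⊆ ret ⁻¹' {w : (ℤ × ℤ) → Bool → ℤ | divB w x = 1} := by
  intro z hz
  simp only [divSet, Set.mem_iUnion, exists_prop] at hz
  obtain ⟨q, hq, hmem⟩ := hz
  rw [Finset.mem_filter] at hq
  obtain ⟨⟨⟨h1, h2⟩, h3⟩, h4⟩ := hmem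
  have e1 : ret z x true = q.1.1 := ret_eq_of h1
  have e2 : ret z x false = q.1.2 := ret_eq_of h2
  have e3 : ret z (x.1 - 1, x.2) true = q.2.1 := ret_eq_of h3
  have e4 : ret z (x.1, x.2 - 1) false = q.2.2 := ret_eq_of h4
  simp only [Set.mem_preimage, Set.mem_setOf_eq, divB, e1, e2, e3, e4]
  exact hq.2

lemma emb_mem_divSet {w : (ℤ × ℤ) → Bool → ℤ} {x : ℤ × ℤ} {C : ℕ}
    (hdiv : divB w x = 1)
    (h1 : |w x true| ≤ (C : ℤ)) (h2 : |w x false| ≤ (C : ℤ))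
    (h3 : |w (x.1 - 1, x.2) true| ≤ (C : ℤ)) (h4 : |w (x.1, x.2 - 1) false| ≤ (C : ℤ)) :
    emb w ∈ divSet x C := by
  simp only [divSet, Set.mem_iUnion, exists_prop]
  refine ⟨((w x true, w x false), (w (x.1 - 1, x.2) true, w (x.1, x.2 - 1) false)), ?_, ?_⟩
  · rw [Finset.mem_filter]
    constructor
    · simp only [Finset.mem_product, Finset.mem_Icc, ← abs_le]
      exact ⟨⟨h1, h2⟩, h3, h4⟩
    · exact hdiv
  · exact ⟨⟨⟨rfl, rfl⟩, rfl⟩, rfl⟩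

lemma sigmaSh_comp_emb (t : ℤ × ℤ) (w : (ℤ × ℤ) → Bool → ℤ) :
    sigmaSh t (emb w) = emb (shiftF t w) := rfl

lemma shiftF_comp_ret (t : ℤ × ℤ) : shiftF t ∘ ret = ret ∘ sigmaSh t := rfl

end LimAux

/-- Lemma 1: if there exist stationary random integer vector fields
`v n : Ω n → (ℤ² → Bool → ℤ)` such that
(a) `ℙ((div (v n))_x = 1) → 1` as `n → ∞` for every vertex `x`, and
(b) `sup_n ℙ(|(v n)_y| > C) → 0` as `C → ∞` for every edge `y`,
then there exists a stationary random vector field (described by its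
shift-invariant law `μ'`) such that
(A) its divergence equals `1` at every vertex with probability `1`, and
(B) `ℙ(|v_y| > C) ≤ sup_n ℙ(|(v n)_y| > C)` for every `C` and every edge `y`. -/
theorem limit_of_stationary_fields
    (Ω : ℕ → Type) [∀ n, MeasurableSpace (Ω n)]
    (μ : ∀ n, Measure (Ω n)) [∀ n, IsProbabilityMeasure (μ n)]
    (v : ∀ n, Ω n → (ℤ × ℤ → Bool → ℤ)) (hmeas : ∀ n, Measurable (v n))
    (hstat : ∀ n (t : ℤ × ℤ),
      Measure.map (fun ω => shiftF t (v n ω)) (μ n) = Measure.map (v n) (μ n))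
    (ha : ∀ x : ℤ × ℤ,
      Tendsto (fun n => μ n {ω | divB (v n ω) x = 1}) atTop (𝓝 1))
    (hb : ∀ y : (ℤ × ℤ) × Bool,
      Tendsto (fun C : ℕ => ⨆ n, μ n {ω | (C : ℤ) < |v n ω y.1 y.2|})
        atTop (𝓝 0)) :
    ∃ μ' : Measure (ℤ × ℤ → Bool → ℤ), IsProbabilityMeasure μ' ∧
      (∀ t : ℤ × ℤ, Measure.map (shiftF t) μ' = μ') ∧
      (∀ x : ℤ × ℤ, μ' {w | divB w x = 1} = 1) ∧
      (∀ (C : ℕ) (y : (ℤ × ℤ) × Bool),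
        μ' {w | (C : ℤ) < |w y.1 y.2|}
          ≤ ⨆ n, μ n {ω | (C : ℤ) < |v n ω y.1 y.2|}) := by
  classical
  -- an ultrafilter extending `atTop` and the associated limit functional on `ℝ≥0∞`
  obtain ⟨𝒰, h𝒰⟩ : ∃ 𝒰 : Ultrafilter ℕ, (𝒰 : Filter ℕ) ≤ atTop :=
    ⟨Ultrafilter.of atTop, Ultrafilter.of_le _⟩
  have hLex : ∀ f : ℕ → ℝ≥0∞, ∃ a, Tendsto f (𝒰 : Filter ℕ) (𝓝 a) := by
    intro f
    obtain ⟨a, -, ha⟩ := isCompact_univ.ultrafilter_le_nhds (𝒰.map f)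
      (by simp [le_principal_iff])
    exact ⟨a, ha⟩
  choose L hL using hLex
  have hLuniq : ∀ {f : ℕ → ℝ≥0∞} {a}, Tendsto f (𝒰 : Filter ℕ) (𝓝 a) → L f = a :=
    fun hf => tendsto_nhds_unique (hL _) hf
  have hLconst : ∀ c : ℝ≥0∞, L (fun _ => c) = c := fun c => hLuniq tendsto_const_nhds
  have hLadd : ∀ f g : ℕ → ℝ≥0∞, L (fun n => f n + g n) = L f + L g :=
    fun f g => hLuniq ((hL f).add (hL g))
  have hLle : ∀ {f g : ℕ → ℝ≥0∞}, (∀ n, f n ≤ g n) → L f ≤ L g :=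
    fun h => le_of_tendsto_of_tendsto' (hL _) (hL _) h
  have hLatTop : ∀ {f : ℕ → ℝ≥0∞} {a}, Tendsto f atTop (𝓝 a) → L f = a :=
    fun hf => hLuniq (hf.mono_left h𝒰)
  -- pushforward laws on the compact space
  set Λ : ℕ → Measure LimAux.XX := fun n => (μ n).map (fun ω => LimAux.emb (v n ω)) with hΛdef
  have hΛm : ∀ n, Measurable fun ω => LimAux.emb (v n ω) :=
    fun n => LimAux.measurable_emb.comp (hmeas n)
  have hΛprob : ∀ n, IsProbabilityMeasure (Λ n) :=
    fun n => Measure.isProbabilityMeasure_map (hΛm n).aemeasurable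
  have hΛ1 : ∀ n A, Λ n A ≤ 1 := fun n A => by
    haveI := hΛprob n; exact prob_le_one
  have hΛapp : ∀ n {A : Set LimAux.XX}, MeasurableSet A →
      Λ n A = μ n ((fun ω => LimAux.emb (v n ω)) ⁻¹' A) := by
    intro n A hA
    simp only [hΛdef]
    exact Measure.map_apply (hΛm n) hA
  -- the limiting set function and the content it induces
  set ψ : Set LimAux.XX → ℝ≥0∞ := fun A => L (fun n => Λ n A) with hψdef
  have hψmono : ∀ {A B : Set LimAux.XX}, A ⊆ B → ψ A ≤ ψ B :=
    fun h => hLle fun n => measure_mono h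
  have hψle1 : ∀ A, ψ A ≤ 1 := fun A => (hLle fun n => hΛ1 n A).trans_eq (hLconst 1)
  have hψadd : ∀ A B : Set LimAux.XX, IsClopen A → IsClopen B → Disjoint A B →
      ψ (A ∪ B) = ψ A + ψ B := by
    intro A B hA hB hAB
    have h1 : ∀ n, Λ n (A ∪ B) = Λ n A + Λ n B := fun n =>
      measure_union hAB hB.2.measurableSet
    calc ψ (A ∪ B) = L (fun n => Λ n A + Λ n B) := by
          simp only [hψdef]; exact congrArg L (funext h1)
      _ = ψ A + ψ B := hLadd _ _
  set ν : Measure LimAux.XX := (LimAux.clopenContent ψ hψmono hψadd hψle1).measure with hνdef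
  have hν : ∀ {C : Set LimAux.XX}, IsClopen C → ν C = ψ C :=
    fun hC => LimAux.clopenContent_measure_clopen ψ hψmono hψadd hψle1 hC
  have hνuniv : ν Set.univ = 1 := by
    rw [hν isClopen_univ]
    have h1 : ∀ n, Λ n Set.univ = 1 := fun n => by haveI := hΛprob n; exact measure_univ
    simp only [hψdef]
    calc L (fun n => Λ n Set.univ) = L (fun _ => 1) := congrArg L (funext h1)
      _ = 1 := hLconst 1
  haveI hνprob : IsProbabilityMeasure ν := ⟨hνuniv⟩
  refine ⟨ν.map LimAux.ret, ?_, ?_, ?_, ?_⟩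
  · exact Measure.isProbabilityMeasure_map LimAux.measurable_ret.aemeasurable
  · -- stationarity
    intro t
    have hΛinv : ∀ n, (Λ n).map (LimAux.sigmaSh t) = Λ n := by
      intro n
      simp only [hΛdef]
      rw [Measure.map_map (LimAux.measurable_sigmaSh t) (hΛm n)]
      have h2 : (LimAux.sigmaSh t) ∘ (fun ω => LimAux.emb (v n ω))
          = LimAux.emb ∘ (fun ω => shiftF t (v n ω)) := rfl
      rw [h2, ← Measure.map_map LimAux.measurable_emb
        (show Measurable fun ω => shiftF t (v n ω) from
          (LimAux.measurable_shiftF t).comp (hmeas n)), hstat n t,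
        Measure.map_map LimAux.measurable_emb (hmeas n)]
      rfl
    have hνinv : ν.map (LimAux.sigmaSh t) = ν := by
      haveI : IsProbabilityMeasure (ν.map (LimAux.sigmaSh t)) :=
        Measure.isProbabilityMeasure_map (LimAux.measurable_sigmaSh t).aemeasurable
      refine MeasureTheory.ext_of_generate_finite {C : Set LimAux.XX | IsClopen C}
        ?_ ?_ ?_ ?_
      · exact (BorelSpace.measurable_eq (α := LimAux.XX)).trans
          isTopologicalBasis_isClopen.borel_eq_generateFrom
      · exact fun A hA B hB _ => hA.inter hB
      · intro s hs
        rw [Measure.map_apply (LimAux.measurable_sigmaSh t) hs.2.measurableSet]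
        have hpre : IsClopen ((LimAux.sigmaSh t) ⁻¹' s) :=
          hs.preimage (LimAux.continuous_sigmaSh t)
        rw [hν hpre, hν hs]
        simp only [hψdef]
        refine congrArg L (funext fun n => ?_)
        calc Λ n ((LimAux.sigmaSh t) ⁻¹' s)
            = (Λ n).map (LimAux.sigmaSh t) s :=
              (Measure.map_apply (LimAux.measurable_sigmaSh t) hs.2.measurableSet).symm
          _ = Λ n s := by rw [hΛinv n]
      · simp [measure_univ]
    rw [Measure.map_map (LimAux.measurable_shiftF t) LimAux.measurable_ret,
      LimAux.shiftF_comp_ret t,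
      ← Measure.map_map LimAux.measurable_ret (LimAux.measurable_sigmaSh t), hνinv]
  · -- divergence
    intro x
    rw [Measure.map_apply LimAux.measurable_ret (LimAux.measurableSet_divB x)]
    set A : Set LimAux.XX := LimAux.ret ⁻¹' {w | divB w x = 1} with hAdef
    set T : ℕ → ℝ≥0∞ := fun C =>
      (⨆ n, μ n {ω | (C : ℤ) < |v n ω x true|}) +
      (⨆ n, μ n {ω | (C : ℤ) < |v n ω x false|}) +
      (⨆ n, μ n {ω | (C : ℤ) < |v n ω (x.1 - 1, x.2) true|}) +
      (⨆ n, μ n {ω | (C : ℤ) < |v n ω (x.1, x.2 - 1) false|}) with hTdef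
    have key : ∀ C : ℕ, (1 : ℝ≥0∞) ≤ ν A + T C := by
      intro C
      have h0 : ∀ n, μ n {ω | divB (v n ω) x = 1} ≤ Λ n (LimAux.divSet x C) + T C := by
        intro n
        have hsub : {ω | divB (v n ω) x = 1} ⊆
            ((fun ω => LimAux.emb (v n ω)) ⁻¹' (LimAux.divSet x C)) ∪
            ({ω | (C : ℤ) < |v n ω x true|} ∪ {ω | (C : ℤ) < |v n ω x false|} ∪
              {ω | (C : ℤ) < |v n ω (x.1 - 1, x.2) true|} ∪
              {ω | (C : ℤ) < |v n ω (x.1, x.2 - 1) false|}) := by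
          intro ω hω
          by_cases h1 : |v n ω x true| ≤ (C : ℤ)
          · by_cases h2 : |v n ω x false| ≤ (C : ℤ)
            · by_cases h3 : |v n ω (x.1 - 1, x.2) true| ≤ (C : ℤ)
              · by_cases h4 : |v n ω (x.1, x.2 - 1) false| ≤ (C : ℤ)
                · exact Or.inl (LimAux.emb_mem_divSet hω h1 h2 h3 h4)
                · exact Or.inr (Or.inr (not_le.1 h4))
              · exact Or.inr (Or.inl (Or.inr (not_le.1 h3)))
            · exact Or.inr (Or.inl (Or.inl (Or.inr (not_le.1 h2))))
          · exact Or.inr (Or.inl (Or.inl (Or.inl (not_le.1 h1))))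
        refine (measure_mono hsub).trans ?_
        refine (measure_union_le _ _).trans ?_
        rw [hΛapp n (LimAux.isClopen_divSet x C).2.measurableSet, hTdef]
        refine add_le_add le_rfl ?_
        have i1 : μ n {ω | (C : ℤ) < |v n ω x true|} ≤
            ⨆ m, μ m {ω | (C : ℤ) < |v m ω x true|} :=
          le_iSup (fun m => μ m {ω | (C : ℤ) < |v m ω x true|}) n
        have i2 : μ n {ω | (C : ℤ) < |v n ω x false|} ≤
            ⨆ m, μ m {ω | (C : ℤ) < |v m ω x false|} :=
          le_iSup (fun m => μ m {ω | (C : ℤ) < |v m ω x false|}) n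
        have i3 : μ n {ω | (C : ℤ) < |v n ω (x.1 - 1, x.2) true|} ≤
            ⨆ m, μ m {ω | (C : ℤ) < |v m ω (x.1 - 1, x.2) true|} :=
          le_iSup (fun m => μ m {ω | (C : ℤ) < |v m ω (x.1 - 1, x.2) true|}) n
        have i4 : μ n {ω | (C : ℤ) < |v n ω (x.1, x.2 - 1) false|} ≤
            ⨆ m, μ m {ω | (C : ℤ) < |v m ω (x.1, x.2 - 1) false|} :=
          le_iSup (fun m => μ m {ω | (C : ℤ) < |v m ω (x.1, x.2 - 1) false|}) n
        refine (measure_union_le _ _).trans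
          (add_le_add ((measure_union_le _ _).trans
            (add_le_add ((measure_union_le _ _).trans
              (add_le_add i1 i2)) i3)) i4)
      have h1 : (1 : ℝ≥0∞) = L (fun n => μ n {ω | divB (v n ω) x = 1}) :=
        (hLatTop (ha x)).symm
      have h2 : L (fun n => μ n {ω | divB (v n ω) x = 1}) ≤
          L (fun n => Λ n (LimAux.divSet x C) + T C) := hLle h0
      have h3 : L (fun n => Λ n (LimAux.divSet x C) + T C) = ψ (LimAux.divSet x C) + T C := by
        rw [hLadd (fun n => Λ n (LimAux.divSet x C)) (fun _ => T C), hLconst]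
      have h4 : ψ (LimAux.divSet x C) ≤ ν A := by
        rw [← hν (LimAux.isClopen_divSet x C)]
        exact measure_mono (LimAux.divSet_subset x C)
      calc (1 : ℝ≥0∞) = L (fun n => μ n {ω | divB (v n ω) x = 1}) := h1
        _ ≤ L (fun n => Λ n (LimAux.divSet x C) + T C) := h2
        _ = ψ (LimAux.divSet x C) + T C := h3
        _ ≤ ν A + T C := add_le_add h4 le_rfl
    have hT0 : Tendsto T atTop (𝓝 0) := by
      have h := (((hb (x, true)).add (hb (x, false))).add
        (hb ((x.1 - 1, x.2), true))).add (hb ((x.1, x.2 - 1), false))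
      simp only [add_zero] at h
      exact h
    have hfin : (1 : ℝ≥0∞) ≤ ν A := by
      have hlim : Tendsto (fun C => ν A + T C) atTop (𝓝 (ν A + 0)) :=
        tendsto_const_nhds.add hT0
      rw [add_zero] at hlim
      exact ge_of_tendsto' hlim key
    exact le_antisymm prob_le_one hfin
  · -- tail bound
    intro C y
    rw [Measure.map_apply LimAux.measurable_ret (LimAux.measurableSet_tail C y)]
    refine (measure_mono (LimAux.ret_tail_subset C y)).trans ?_
    rw [hν (LimAux.isClopen_ball y C).compl]
    simp only [hψdef]
    refine (hLle fun n => ?_).trans_eq (hLconst _)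
    rw [hΛapp n (LimAux.isClopen_ball y C).compl.2.measurableSet]
    refine (measure_mono ?_).trans
      (le_iSup (fun n => μ n {ω | (C : ℤ) < |v n ω y.1 y.2|}) n)
    intro ω hω
    exact LimAux.emb_ball_compl_subset n C y hω
end
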